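/- Let m ≥ 1 be an integer and α ∈ ℂ. Let f : ℝ × ℤ → ℂ be differentiable in the first (time) variable and satisfy the modified Bogoyavlensky lattice ∂_t f(t,n) = f(t,n)·(f(t,n) − α)·(∏_{s=1}^{m} f(t,n+s) − ∏_{s=1}^{m} f(t,n−s)) for all t and n. Then the function ũ(t,n) := (f(t,n+m) − α)·∏_{s=0}^{m−1} f(t,n+s) satisfies the Bogoyavlensky lattice ∂_t ũ(t,n) = ũ(t,n)·(Σ_{s=1}^{m} ũ(t,n+s) − Σ_{s=1}^{m} ũ(t,n−s)) for all t and n. -/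

import Mathlib

open Finset

/-- Product of `m` consecutive values of `v` starting at `k`. -/
def bogoRp (v : ℤ → ℂ) (m : ℕ) (k : ℤ) : ℂ := ∏ i ∈ Finset.range m, v (k + i)

lemma bogoRp_shift1 (v : ℤ → ℂ) (m : ℕ) (k : ℤ) :
    ∏ s ∈ Finset.range m, v (k + s + 1) = bogoRp v m (k + 1) := by
  refine Finset.prod_congr rfl fun s _ => ?_
  congr 1; ring

lemma bogoRp_reflect (v : ℤ → ℂ) (m : ℕ) (k : ℤ) :
    ∏ s ∈ Finset.range m, v (k - s - 1) = bogoRp v m (k - m) := by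
  unfold bogoRp
  rw [← Finset.prod_range_reflect (fun i => v (k - m + i)) m]
  refine Finset.prod_congr rfl fun s hs => ?_
  simp only [Finset.mem_range] at hs
  congr 1
  omega

lemma bogoSum_reflect (g : ℤ → ℂ) (m : ℕ) (k : ℤ) :
    ∑ s ∈ Finset.range m, g (k - s - 1) = ∑ i ∈ Finset.range m, g (k - m + i) := by
  rw [← Finset.sum_range_reflect (fun i => g (k - m + i)) m]
  refine Finset.sum_congr rfl fun s hs => ?_
  simp only [Finset.mem_range] at hs
  congr 1
  omega

lemma bogoQ_left (v : ℤ → ℂ) (m : ℕ) (k : ℤ) :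
    bogoRp v (m + 1) k = v k * bogoRp v m (k + 1) := by
  unfold bogoRp
  rw [Finset.prod_range_succ' (fun i => v (k + i)) m]
  have h1 : ∀ s ∈ Finset.range m, v (k + ((s + 1 : ℕ) : ℤ)) = v (k + 1 + s) := by
    intro s _; congr 1; push_cast; ring
  rw [Finset.prod_congr rfl h1]
  simp only [Nat.cast_zero, add_zero]
  ring

lemma bogoQ_right (v : ℤ → ℂ) (m : ℕ) (k : ℤ) :
    bogoRp v (m + 1) k = bogoRp v m k * v (k + m) := by
  unfold bogoRp
  rw [Finset.prod_range_succ]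

/-- The core algebraic identity. -/
lemma bogo_key (v : ℤ → ℂ) (α : ℂ) (m : ℕ) (n : ℤ) :
    v (n + m) * (bogoRp v m (n + m + 1) - bogoRp v m n)
      + ∑ j ∈ Finset.range m,
          (v (n + j) - α) * (bogoRp v m (n + j + 1) - bogoRp v m (n + j - m))
    = (∑ s ∈ Finset.range m,
          (bogoRp v (m + 1) (n + s + 1) - α * bogoRp v m (n + s + 1)))
      - ∑ s ∈ Finset.range m,
          (bogoRp v (m + 1) (n - s - 1) - α * bogoRp v m (n - s - 1)) := by
  have h1 : ∀ j ∈ Finset.range m,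
      (v (n + j) - α) * (bogoRp v m (n + j + 1) - bogoRp v m (n + j - m))
      = (bogoRp v (m + 1) (n + j) - α * bogoRp v m (n + j + 1))
        - (bogoRp v (m + 1) (n + j - m) - α * bogoRp v m (n + j - m)) := by
    intro j _
    have e1 : bogoRp v (m + 1) (n + j) = v (n + j) * bogoRp v m (n + j + 1) :=
      bogoQ_left v m (n + j)
    have e2 : bogoRp v (m + 1) (n + j - m) = bogoRp v m (n + j - m) * v (n + j) := by
      rw [bogoQ_right]
      congr 2
      ring
    rw [e1, e2]; ring
  rw [Finset.sum_congr rfl h1]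
  simp only [Finset.sum_sub_distrib, mul_sub]
  -- telescoping in the Q-part
  have tele1 : v (n + m) * bogoRp v m (n + m + 1) = bogoRp v (m + 1) (n + m) :=
    (bogoQ_left v m (n + m)).symm
  have tele0 : v (n + m) * bogoRp v m n = bogoRp v (m + 1) n := by
    rw [bogoQ_right v m n]; ring
  have hsumQ : ∑ j ∈ Finset.range m, bogoRp v (m + 1) (n + j) + bogoRp v (m + 1) (n + m)
      = bogoRp v (m + 1) n + ∑ s ∈ Finset.range m, bogoRp v (m + 1) (n + s + 1) := by
    rw [← Finset.sum_range_succ (fun j => bogoRp v (m + 1) (n + j)) m,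
      Finset.sum_range_succ' (fun j => bogoRp v (m + 1) (n + j)) m]
    push_cast
    rw [add_comm]
    congr 1
    · congr 1; ring
    · refine Finset.sum_congr rfl fun s _ => ?_
      congr 1; ring
  have hreflQ : ∑ j ∈ Finset.range m, bogoRp v (m + 1) (n + j - m)
      = ∑ s ∈ Finset.range m, bogoRp v (m + 1) (n - s - 1) := by
    rw [bogoSum_reflect (fun k => bogoRp v (m + 1) k) m n]
    refine Finset.sum_congr rfl fun s _ => ?_
    congr 1; ring
  have hreflR : ∑ j ∈ Finset.range m, α * bogoRp v m (n + j - m)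
      = ∑ s ∈ Finset.range m, α * bogoRp v m (n - s - 1) := by
    rw [bogoSum_reflect (fun k => α * bogoRp v m k) m n]
    refine Finset.sum_congr rfl fun s _ => ?_
    congr 2; ring
  -- combine
  linear_combination tele1 - tele0 + hsumQ - hreflQ + hreflR

/-- The Miura-type substitution `ũ = (f_m - α) f_{m-1} ⋯ f` maps solutions of the
modified Bogoyavlensky lattice into solutions of the Bogoyavlensky lattice. -/
theorem miura_modified_to_bogoyavlensky_second
    (m : ℕ) (hm : 1 ≤ m) (α : ℂ)
    (f : ℝ → ℤ → ℂ)
    (hf : ∀ (t : ℝ) (n : ℤ),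
      HasDerivAt (fun τ => f τ n)
        (f t n * (f t n - α) *
          ((∏ s ∈ Finset.range m, f t (n + s + 1)) -
            ∏ s ∈ Finset.range m, f t (n - s - 1))) t)
    (u' : ℝ → ℤ → ℂ)
    (hu' : ∀ (t : ℝ) (n : ℤ),
      u' t n = (f t (n + m) - α) * ∏ s ∈ Finset.range m, f t (n + s)) :
    ∀ (t : ℝ) (n : ℤ),
      HasDerivAt (fun τ => u' τ n)
        (u' t n *
          ((∑ s ∈ Finset.range m, u' t (n + s + 1)) -
            ∑ s ∈ Finset.range m, u' t (n - s - 1))) t := by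
  intro t n
  set v : ℤ → ℂ := f t with hv
  -- derivative value of each factor
  set w : ℤ → ℂ := fun k => v k * (v k - α) *
      ((∏ s ∈ Finset.range m, v (k + s + 1)) - ∏ s ∈ Finset.range m, v (k - s - 1))
    with hw
  have hfun : (fun τ => u' τ n)
      = (fun τ => (f τ (n + m) - α) * ∏ s ∈ Finset.range m, f τ (n + s)) :=
    funext fun τ => hu' τ n
  rw [hfun]
  have hprod : HasDerivAt (fun τ => ∏ s ∈ Finset.range m, f τ (n + s))
      (∑ j ∈ Finset.range m,
        (∏ s ∈ (Finset.range m).erase j, v (n + s)) • w (n + j)) t :=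
    HasDerivAt.fun_finsetProd (fun j _ => hf t (n + j))
  have h := ((hf t (n + m)).sub_const α).mul hprod
  have hkey :
      w (n + m) * ∏ s ∈ Finset.range m, v (n + s)
        + (v (n + m) - α) * ∑ j ∈ Finset.range m,
            (∏ s ∈ (Finset.range m).erase j, v (n + s)) • w (n + j)
      = u' t n *
          ((∑ s ∈ Finset.range m, u' t (n + s + 1)) -
            ∑ s ∈ Finset.range m, u' t (n - s - 1)) := by
    have hP : ∏ s ∈ Finset.range m, v (n + s) = bogoRp v m n := rfl
    have herase : ∀ j ∈ Finset.range m,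
        (∏ s ∈ (Finset.range m).erase j, v (n + s)) • w (n + j)
        = bogoRp v m n *
            ((v (n + j) - α) * (bogoRp v m (n + j + 1) - bogoRp v m (n + j - m))) := by
      intro j hj
      rw [smul_eq_mul, hw]
      simp only
      rw [bogoRp_shift1, bogoRp_reflect]
      have : (∏ s ∈ (Finset.range m).erase j, v (n + s)) * v (n + j) = bogoRp v m n := by
        rw [← hP]
        exact Finset.prod_erase_mul _ _ hj
      calc (∏ s ∈ (Finset.range m).erase j, v (n + s)) *
            (v (n + j) * (v (n + j) - α) * (bogoRp v m (n + j + 1) - bogoRp v m (n + j - m)))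
          = ((∏ s ∈ (Finset.range m).erase j, v (n + s)) * v (n + j)) *
            ((v (n + j) - α) * (bogoRp v m (n + j + 1) - bogoRp v m (n + j - m))) := by ring
        _ = _ := by rw [this]
    rw [Finset.sum_congr rfl herase, ← Finset.mul_sum]
    have hwnm : w (n + m) = v (n + m) * (v (n + m) - α) *
        (bogoRp v m (n + m + 1) - bogoRp v m n) := by
      rw [hw]
      simp only
      rw [bogoRp_shift1, bogoRp_reflect]
      have hnm : n + (m : ℤ) - m = n := by ring
      rw [hnm]
    have hun : u' t n = (v (n + m) - α) * bogoRp v m n := hu' t n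
    have huk : ∀ k : ℤ, u' t k = bogoRp v (m + 1) k - α * bogoRp v m k := by
      intro k
      rw [hu' t k, bogoQ_right]
      unfold bogoRp
      simp only [← hv]
      ring
    simp only [huk]
    rw [hwnm, hP]
    have hQn : bogoRp v (m + 1) n - α * bogoRp v m n = (v (n + m) - α) * bogoRp v m n := by
      rw [bogoQ_right]; ring
    rw [hQn]
    linear_combination ((v (n + (m : ℤ)) - α) * bogoRp v m n) * bogo_key v α m n
  have h' : HasDerivAt
      (fun τ => (f τ (n + m) - α) * ∏ s ∈ Finset.range m, f τ (n + s))
      (w (n + m) * ∏ s ∈ Finset.range m, v (n + s)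
        + (v (n + m) - α) * ∑ j ∈ Finset.range m,
            (∏ s ∈ (Finset.range m).erase j, v (n + s)) • w (n + j)) t := h
  exact hkey ▸ h'
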